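/- Let M ≅ L ⊕ K be a retractive dgl over L with kernel K. Then every Maurer–Cartan element z of M can be written uniquely as z = x + y with x ∈ MC(L) and y ∈ MC(K, d_x), where (K, d_x) denotes K with the differential perturbed by x. -/

import Mathlib

/-- A (ℤ-graded) differential graded Lie algebra over ℚ. -/
structure DGL where
  carrier : Type
  [isAddCommGroup : AddCommGroup carrier]
  [isModule : Module ℚ carrier]
  grading : ℤ → Submodule ℚ carrier
  isInternal : DirectSum.IsInternal grading
  bracket : carrier →ₗ[ℚ] carrier →ₗ[ℚ] carrier
  d : carrier →ₗ[ℚ] carrier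
  bracket_mem : ∀ {i j : ℤ} {x y : carrier}, x ∈ grading i → y ∈ grading j →
      bracket x y ∈ grading (i + j)
  d_mem : ∀ {i : ℤ} {x : carrier}, x ∈ grading i → d x ∈ grading (i - 1)
  antisymm : ∀ {i j : ℤ} {x y : carrier}, x ∈ grading i → y ∈ grading j →
      bracket x y = -(((-1 : ℚ) ^ (i * j)) • bracket y x)
  jacobi : ∀ {i j k : ℤ} {x y z : carrier}, x ∈ grading i → y ∈ grading j → z ∈ grading k →
      ((-1 : ℚ) ^ (i * k)) • bracket x (bracket y z) +
      ((-1 : ℚ) ^ (j * i)) • bracket y (bracket z x) +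
      ((-1 : ℚ) ^ (k * j)) • bracket z (bracket x y) = 0
  leibniz : ∀ {i : ℤ} {x : carrier}, x ∈ grading i → ∀ y : carrier,
      d (bracket x y) = bracket (d x) y + ((-1 : ℚ) ^ i) • bracket x (d y)
  d_squared : ∀ x : carrier, d (d x) = 0

attribute [instance] DGL.isAddCommGroup DGL.isModule


/-- A morphism of differential graded Lie algebras. -/
structure DGLHom (L M : DGL) where
  toFun : L.carrier →ₗ[ℚ] M.carrier
  map_grading : ∀ (i : ℤ) (x : L.carrier), x ∈ L.grading i → toFun x ∈ M.grading i
  map_bracket : ∀ x y : L.carrier, toFun (L.bracket x y) = M.bracket (toFun x) (toFun y)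
  map_d : ∀ x : L.carrier, toFun (L.d x) = M.d (toFun x)

/-- let `M ≅ L ⊕ K` be a retractive dgl over `L` (section `s`, retraction `p`,
kernel `K = ker p`).  Every Maurer–Cartan element `z` of `M` can be written uniquely as
`z = x + y` where `x ∈ MC(L)` (included via `s`) and `y ∈ K` is a Maurer–Cartan element of
`(K, d_x)`, the kernel with the differential perturbed by `x`. -/
theorem stmt4 (L M : DGL) (p : DGLHom M L) (s : DGLHom L M)
    (hsec : ∀ x : L.carrier, p.toFun (s.toFun x) = x)
    (z : M.carrier) (hz : z ∈ M.grading (-1))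
    (hzMC : M.d z = -((1/2 : ℚ) • M.bracket z z)) :
    ∃! xy : L.carrier × M.carrier,
      xy.1 ∈ L.grading (-1) ∧
      L.d xy.1 = -((1/2 : ℚ) • L.bracket xy.1 xy.1) ∧
      xy.2 ∈ LinearMap.ker p.toFun ∧
      xy.2 ∈ M.grading (-1) ∧
      z = s.toFun xy.1 + xy.2 ∧
      M.d xy.2 + M.bracket (s.toFun xy.1) xy.2 = -((1/2 : ℚ) • M.bracket xy.2 xy.2) := by
  classical
  set x : L.carrier := p.toFun z with hx
  set a : M.carrier := s.toFun x with ha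
  set y : M.carrier := z - a with hy
  have hxg : x ∈ L.grading (-1) := p.map_grading _ _ hz
  have hag : a ∈ M.grading (-1) := s.map_grading _ _ hxg
  have hyg : y ∈ M.grading (-1) := (M.grading (-1)).sub_mem hz hag
  have hxMC : L.d x = -((1/2 : ℚ) • L.bracket x x) := by
    have := congrArg p.toFun hzMC
    rw [p.map_d, map_neg, map_smul, p.map_bracket] at this
    simpa [hx] using this
  have hyker : y ∈ LinearMap.ker p.toFun := by
    simp [hy, ha, hsec, hx]
  have hday : M.d a = -((1/2 : ℚ) • M.bracket a a) := by
    have := congrArg s.toFun hxMC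
    rw [s.map_d, map_neg, map_smul, s.map_bracket] at this
    simpa [ha] using this
  have hanti : M.bracket a y = M.bracket y a := by
    have := M.antisymm hag hyg
    norm_num at this
    simpa using this
  have hyMC : M.d y + M.bracket a y = -((1/2 : ℚ) • M.bracket y y) := by
    have hz' : z = a + y := by simp [hy]
    have hexp : M.bracket z z =
        M.bracket a a + M.bracket a y + M.bracket y a + M.bracket y y := by
      rw [hz']
      simp [map_add, LinearMap.add_apply]
      abel
    have hd : M.d y = M.d z - M.d a := by simp [hy]
    rw [hd, hzMC, hday, hexp, hanti]
    module
  refine ⟨(x, y), ⟨hxg, hxMC, hyker, hyg, by simp [hy, ha], hyMC⟩, ?_⟩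
  rintro ⟨x', y'⟩ ⟨_, _, hk', _, hzeq, _⟩
  have hx' : x' = x := by
    have := congrArg p.toFun hzeq
    rw [map_add, hsec] at this
    rw [LinearMap.mem_ker] at hk'
    simp [hk'] at this
    simp [hx, this]
  have hy' : y' = y := by
    rw [hy, ha, ← hx', hzeq]; abel
  simp [hx', hy']
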